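/- (Proposition 1, equivalence part, unconstrained case) Let Ŷ ∈ ℝ^{p×H}, V ∈ ℝ^{H×H}, r ∈ ℝ^p, v ∈ ℝ^H, Q ⪰ 0, λ_g, λ'_k > 0, and let g* minimize c_q(g) = ‖Ŷg − r‖_Q² + λ_g‖g‖² + λ'_k‖Vg − v‖² over ℝ^H. Suppose Ŷg* ≠ r, Vg* ≠ v, and g* ≠ 0. Define λ_k = λ'_k‖Vg* − v‖ / ‖Ŷg* − r‖_Q, and choose ρ₁ ≥ 0, ρ₂ ≥ 0 with λ_k ρ₁ ‖g*‖/√(‖g*‖²+1) + ρ₂ = λ_g‖g*‖/‖Ŷg* − r‖_Q. Then g* also minimizes c(g) = ‖Ŷg − r‖_Q + λ_k ρ₁√(‖g‖²+1) + ρ₂‖g‖ + λ_k‖Vg − v‖ over ℝ^H. -/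

import Mathlib

set_option maxHeartbeats 1000000
open Matrix BigOperators

noncomputable def vnorm {n : ℕ} (x : Fin n → ℝ) : ℝ := Real.sqrt (∑ i, x i ^ 2)

noncomputable def qnorm {n : ℕ} (Q : Matrix (Fin n) (Fin n) ℝ) (v : Fin n → ℝ) : ℝ :=
  Real.sqrt (v ⬝ᵥ Q.mulVec v)

lemma vnorm_eq_norm {n : ℕ} (x : Fin n → ℝ) :
    vnorm x = ‖(WithLp.equiv 2 (Fin n → ℝ)).symm x‖ := by
  rw [EuclideanSpace.norm_eq]
  simp [vnorm, sq_abs]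

lemma vnorm_nonneg {n : ℕ} (x : Fin n → ℝ) : 0 ≤ vnorm x := Real.sqrt_nonneg _

lemma vnorm_add_le {n : ℕ} (x y : Fin n → ℝ) : vnorm (x + y) ≤ vnorm x + vnorm y := by
  simp only [vnorm_eq_norm]; exact norm_add_le _ _

lemma vnorm_smul {n : ℕ} (t : ℝ) (x : Fin n → ℝ) : vnorm (t • x) = |t| * vnorm x := by
  simp only [vnorm_eq_norm]
  rw [show (WithLp.equiv 2 (Fin n → ℝ)).symm (t • x)
      = t • (WithLp.equiv 2 (Fin n → ℝ)).symm x from rfl]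
  rw [norm_smul]; simp

lemma vnorm_pos {n : ℕ} {x : Fin n → ℝ} (hx : x ≠ 0) : 0 < vnorm x := by
  rw [vnorm_eq_norm, norm_pos_iff]; simpa using hx

lemma vnorm_sq {n : ℕ} (x : Fin n → ℝ) : vnorm x ^ 2 = ∑ i, x i ^ 2 :=
  Real.sq_sqrt (Finset.sum_nonneg fun i _ => sq_nonneg _)

lemma vnorm_snoc {n : ℕ} (x : Fin n → ℝ) :
    vnorm (Fin.snoc x (1:ℝ)) = Real.sqrt (vnorm x ^ 2 + 1) := by
  rw [vnorm_sq, vnorm, Fin.sum_univ_castSucc]; simp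

lemma vnorm_snoc_sq {n : ℕ} (x : Fin n → ℝ) :
    vnorm (Fin.snoc x (1:ℝ)) ^ 2 = vnorm x ^ 2 + 1 := by
  rw [vnorm_snoc]
  exact Real.sq_sqrt (by positivity)

lemma qnorm_factor {n : ℕ} (Q : Matrix (Fin n) (Fin n) ℝ) (hQ : Q.PosSemidef) :
    ∃ B : Matrix (Fin n) (Fin n) ℝ, ∀ x, qnorm Q x = vnorm (B.mulVec x) := by
  obtain ⟨B, hB⟩ : ∃ B : Matrix (Fin n) (Fin n) ℝ, Q = Bᴴ * B := by
    open scoped MatrixOrder in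
    obtain ⟨X, hX, -, hXQ⟩ :=
      CFC.exists_sqrt_of_isSelfAdjoint_of_quasispectrumRestricts (sub_zero Q ▸ hQ.isHermitian)
        (QuasispectrumRestricts.nnreal_of_nonneg (Matrix.nonneg_iff_posSemidef.mpr hQ))
    exact ⟨X, by rw [show Xᴴ = X from hX.star_eq, hXQ]⟩
  refine ⟨B, fun x => ?_⟩
  rw [qnorm, vnorm, hB]
  congr 1
  rw [← Matrix.mulVec_mulVec, Matrix.dotProduct_mulVec,
    show Bᴴ = Bᵀ from Matrix.conjTranspose_eq_transpose_of_trivial B,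
    Matrix.vecMul_transpose, dotProduct]
  exact Finset.sum_congr rfl fun i _ => (sq (B.mulVec x i)).symm

lemma seg_cv {n : ℕ} (a b : Fin n → ℝ) {t : ℝ} (h0 : 0 ≤ t) (h1 : t ≤ 1) :
    vnorm (a + t • b) ≤ (1 - t) * vnorm a + t * vnorm (a + b) := by
  have h : a + t • b = (1 - t) • a + t • (a + b) := by module
  rw [h]
  calc vnorm ((1-t) • a + t • (a+b)) ≤ vnorm ((1-t) • a) + vnorm (t • (a+b)) :=
        vnorm_add_le _ _
    _ = (1 - t) * vnorm a + t * vnorm (a + b) := by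
        rw [vnorm_smul, vnorm_smul, abs_of_nonneg (by linarith), abs_of_nonneg h0]

lemma seg_lip {n : ℕ} (a b : Fin n → ℝ) {t : ℝ} (h0 : 0 ≤ t) :
    (vnorm (a + t • b) - vnorm a) ^ 2 ≤ t ^ 2 * vnorm b ^ 2 := by
  have hsm : vnorm (t • b) = t * vnorm b := by rw [vnorm_smul, abs_of_nonneg h0]
  have hu : vnorm (a + t • b) ≤ vnorm a + t * vnorm b := by
    calc vnorm (a + t • b) ≤ vnorm a + vnorm (t • b) := vnorm_add_le _ _
      _ = vnorm a + t * vnorm b := by rw [hsm]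
  have hl : vnorm a ≤ vnorm (a + t • b) + t * vnorm b := by
    have he : a = (a + t • b) + (-1 : ℝ) • (t • b) := by module
    calc vnorm a = vnorm ((a + t • b) + (-1:ℝ) • (t • b)) := by rw [← he]
      _ ≤ vnorm (a + t • b) + vnorm ((-1:ℝ) • (t • b)) := vnorm_add_le _ _
      _ = vnorm (a + t • b) + t * vnorm b := by rw [vnorm_smul, hsm]; norm_num
  have := sq_le_sq' (by linarith : -(t * vnorm b) ≤ vnorm (a + t • b) - vnorm a)
    (by linarith : vnorm (a + t • b) - vnorm a ≤ t * vnorm b)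
  calc (vnorm (a + t • b) - vnorm a) ^ 2 ≤ (t * vnorm b) ^ 2 := this
    _ = t ^ 2 * vnorm b ^ 2 := by ring


lemma core {n1 n2 n3 n4 : ℕ} (a1 b1 : Fin n1 → ℝ) (a2 b2 : Fin n2 → ℝ)
    (a3 b3 : Fin n3 → ℝ) (a4 b4 : Fin n4 → ℝ)
    (lg lk' lk ρ1 ρ2 : ℝ) (hρ1 : 0 ≤ ρ1) (hρ2 : 0 ≤ ρ2)
    (hα : 0 < vnorm a1) (hβ : 0 < vnorm a4) (hγ : 0 < vnorm a3) (hδ : 0 < vnorm a2)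
    (hlkpos : 0 < lk)
    (hrel : ∀ t : ℝ, vnorm (a2 + t • b2) ^ 2 = vnorm (a3 + t • b3) ^ 2 + 1)
    (hrel0 : vnorm a2 ^ 2 = vnorm a3 ^ 2 + 1)
    (id1 : lk * vnorm a1 = lk' * vnorm a4)
    (id2 : lk * ρ1 * vnorm a3 * vnorm a1 + ρ2 * vnorm a1 * vnorm a2
        = lg * vnorm a3 * vnorm a2)
    (hmin : ∀ t : ℝ, 0 < t → t ≤ 1 →
      vnorm a1 ^ 2 + lg * vnorm a3 ^ 2 + lk' * vnorm a4 ^ 2 ≤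
      vnorm (a1 + t • b1) ^ 2 + lg * vnorm (a3 + t • b3) ^ 2
        + lk' * vnorm (a4 + t • b4) ^ 2) :
    vnorm a1 + lk * ρ1 * vnorm a2 + ρ2 * vnorm a3 + lk * vnorm a4 ≤
      vnorm (a1 + b1) + lk * ρ1 * vnorm (a2 + b2) + ρ2 * vnorm (a3 + b3)
        + lk * vnorm (a4 + b4) := by
  set α := vnorm a1
  set β := vnorm a4
  set γ := vnorm a3
  set δ := vnorm a2
  set e1 := vnorm (a1 + b1)
  set e2 := vnorm (a2 + b2)
  set e3 := vnorm (a3 + b3)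
  set e4 := vnorm (a4 + b4)
  have hb1 := sq_nonneg (vnorm b1)
  have hb2 := sq_nonneg (vnorm b2)
  have hb3 := sq_nonneg (vnorm b3)
  have hb4 := sq_nonneg (vnorm b4)
  have hw1 : (0:ℝ) ≤ β*γ*δ := by positivity
  have hw2 : (0:ℝ) ≤ lk*ρ1*α*β*γ := by positivity
  have hw3 : (0:ℝ) ≤ ρ2*α*β*δ := by positivity
  have hw4 : (0:ℝ) ≤ lk*α*γ*δ := by positivity
  set M := β*γ*δ*vnorm b1^2 + lk*ρ1*α*β*γ*vnorm b2^2 + ρ2*α*β*δ*vnorm b3^2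
      + lk*α*γ*δ*vnorm b4^2 with hMdef
  set X := 2*α*β*γ*δ*((e1 + lk*ρ1*e2 + ρ2*e3 + lk*e4) - (α + lk*ρ1*δ + ρ2*γ + lk*β))
      with hXdef
  have key : ∀ t : ℝ, 0 < t → t ≤ 1 → 0 ≤ X + M * t := by
    intro t ht0 ht1
    set f1 := vnorm (a1 + t • b1)
    set f2 := vnorm (a2 + t • b2)
    set f3 := vnorm (a3 + t • b3)
    set f4 := vnorm (a4 + t • b4)
    have cv1 := seg_cv a1 b1 ht0.le ht1
    have cv2 := seg_cv a2 b2 ht0.le ht1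
    have cv3 := seg_cv a3 b3 ht0.le ht1
    have cv4 := seg_cv a4 b4 ht0.le ht1
    have lp1 := seg_lip a1 b1 ht0.le
    have lp2 := seg_lip a2 b2 ht0.le
    have lp3 := seg_lip a3 b3 ht0.le
    have lp4 := seg_lip a4 b4 ht0.le
    have hrt := hrel t
    have hDq : 0 ≤ f1^2 - α^2 + lg*(f3^2 - γ^2) + lk'*(f4^2 - β^2) := by
      have := hmin t ht0 ht1; linarith
    have hscale : 0 ≤ β*γ*δ*(f1^2 - α^2 + lg*(f3^2 - γ^2) + lk'*(f4^2 - β^2)) :=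
      mul_nonneg hw1 hDq
    have hE1 : β*γ*δ*(f1^2 - α^2 + lg*(f3^2 - γ^2) + lk'*(f4^2 - β^2))
        = β*γ*δ*(f1^2 - α^2) + lk*ρ1*α*β*γ*(f2^2 - δ^2) + ρ2*α*β*δ*(f3^2 - γ^2)
          + lk*α*γ*δ*(f4^2 - β^2) := by
      linear_combination (-(β*(f3^2 - γ^2))) * id2 - (lk*ρ1*α*β*γ) * hrt
        + (lk*ρ1*α*β*γ) * hrel0 - (γ*δ*(f4^2 - β^2)) * id1
    have E1 : 0 ≤ β*γ*δ*(f1^2 - α^2) + lk*ρ1*α*β*γ*(f2^2 - δ^2)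
        + ρ2*α*β*δ*(f3^2 - γ^2) + lk*α*γ*δ*(f4^2 - β^2) := hE1 ▸ hscale
    have hc1 : f1 - α ≤ t * (e1 - α) := by linarith [cv1]
    have hc2 : f2 - δ ≤ t * (e2 - δ) := by linarith [cv2]
    have hc3 : f3 - γ ≤ t * (e3 - γ) := by linarith [cv3]
    have hc4 : f4 - β ≤ t * (e4 - β) := by linarith [cv4]
    have s1 : f1^2 - α^2 ≤ 2*α*(t*(e1 - α)) + t^2*vnorm b1^2 := by
      have h := mul_le_mul_of_nonneg_left hc1 (by linarith : (0:ℝ) ≤ 2*α)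
      linarith [lp1, h]
    have s2 : f2^2 - δ^2 ≤ 2*δ*(t*(e2 - δ)) + t^2*vnorm b2^2 := by
      have h := mul_le_mul_of_nonneg_left hc2 (by linarith : (0:ℝ) ≤ 2*δ)
      linarith [lp2, h]
    have s3 : f3^2 - γ^2 ≤ 2*γ*(t*(e3 - γ)) + t^2*vnorm b3^2 := by
      have h := mul_le_mul_of_nonneg_left hc3 (by linarith : (0:ℝ) ≤ 2*γ)
      linarith [lp3, h]
    have s4 : f4^2 - β^2 ≤ 2*β*(t*(e4 - β)) + t^2*vnorm b4^2 := by
      have h := mul_le_mul_of_nonneg_left hc4 (by linarith : (0:ℝ) ≤ 2*β)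
      linarith [lp4, h]
    have T1 := mul_le_mul_of_nonneg_left s1 hw1
    have T2 := mul_le_mul_of_nonneg_left s2 hw2
    have T3 := mul_le_mul_of_nonneg_left s3 hw3
    have T4 := mul_le_mul_of_nonneg_left s4 hw4
    have hsum : 0 ≤ t * (X + M * t) := by
      rw [hXdef, hMdef]; linarith [E1, T1, T2, T3, T4]
    have := le_of_mul_le_mul_left (by linarith : t * 0 ≤ t * (X + M * t)) ht0
    linarith
  have hM : 0 ≤ M := by
    rw [hMdef]
    have := mul_nonneg hw1 hb1
    have := mul_nonneg hw2 hb2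
    have := mul_nonneg hw3 hb3
    have := mul_nonneg hw4 hb4
    linarith
  have hX : 0 ≤ X := by
    by_contra hXc
    push_neg at hXc
    have hMp : (0:ℝ) < M + 1 := by linarith
    have htp : 0 < -X / (M + 1) := div_pos (by linarith) hMp
    have hk := key (min 1 (-X/(M+1))) (lt_min one_pos htp) (min_le_left _ _)
    have hb : M * min 1 (-X/(M+1)) ≤ M * (-X/(M+1)) :=
      mul_le_mul_of_nonneg_left (min_le_right _ _) hM
    have heq : X + M * (-X/(M+1)) = X / (M+1) := by field_simp; ring
    have : X / (M+1) < 0 := div_neg_of_neg_of_pos hXc hMp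
    linarith
  have hpos : (0:ℝ) < 2*α*β*γ*δ := by positivity
  have h0 : 2*α*β*γ*δ*(0:ℝ) ≤ 2*α*β*γ*δ*((e1 + lk*ρ1*e2 + ρ2*e3 + lk*e4)
      - (α + lk*ρ1*δ + ρ2*γ + lk*β)) := by rw [hXdef] at hX; linarith
  have := le_of_mul_le_mul_left h0 hpos
  linarith

lemma snoc_add_smul {H : ℕ} (x y : Fin H → ℝ) (t : ℝ) :
    (Fin.snoc x (1:ℝ) : Fin (H+1) → ℝ) + t • (Fin.snoc y (0:ℝ) : Fin (H+1) → ℝ)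
      = (Fin.snoc (x + t • y) (1:ℝ) : Fin (H+1) → ℝ) := by
  funext i
  induction i using Fin.lastCases with
  | last => simp
  | cast j => simp

lemma snoc_add {H : ℕ} (x y : Fin H → ℝ) :
    (Fin.snoc x (1:ℝ) : Fin (H+1) → ℝ) + (Fin.snoc y (0:ℝ) : Fin (H+1) → ℝ)
      = (Fin.snoc (x + y) (1:ℝ) : Fin (H+1) → ℝ) := by
  funext i
  induction i using Fin.lastCases with
  | last => simp
  | cast j => simp

/-- Proposition 1 (equivalence, unconstrained case): a minimizer g* of the quadratic cost
c_q also minimizes the original cost c with the matched parameters λ_k, ρ₁, ρ₂. -/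
theorem stmt13 {p H : ℕ} (Q : Matrix (Fin p) (Fin p) ℝ) (hQ : Q.PosSemidef)
    (Yh : Matrix (Fin p) (Fin H) ℝ) (V : Matrix (Fin H) (Fin H) ℝ)
    (lg lk' : ℝ) (hlg : 0 < lg) (hlk' : 0 < lk')
    (r : Fin p → ℝ) (v : Fin H → ℝ) (gstar : Fin H → ℝ)
    (hmin : ∀ g : Fin H → ℝ,
      qnorm Q (Yh.mulVec gstar - r) ^ 2 + lg * vnorm gstar ^ 2 +
        lk' * vnorm (V.mulVec gstar - v) ^ 2 ≤
      qnorm Q (Yh.mulVec g - r) ^ 2 + lg * vnorm g ^ 2 + lk' * vnorm (V.mulVec g - v) ^ 2)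
    (h1 : Yh.mulVec gstar ≠ r) (h2 : V.mulVec gstar ≠ v) (h3 : gstar ≠ 0)
    (lk ρ1 ρ2 : ℝ) (hρ1 : 0 ≤ ρ1) (hρ2 : 0 ≤ ρ2)
    (hlk : lk = lk' * vnorm (V.mulVec gstar - v) / qnorm Q (Yh.mulVec gstar - r))
    (hρ : lk * ρ1 * vnorm gstar / Real.sqrt (vnorm gstar ^ 2 + 1) + ρ2 =
      lg * vnorm gstar / qnorm Q (Yh.mulVec gstar - r)) :
    ∀ g : Fin H → ℝ,
      qnorm Q (Yh.mulVec gstar - r) + lk * ρ1 * Real.sqrt (vnorm gstar ^ 2 + 1) +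
        ρ2 * vnorm gstar + lk * vnorm (V.mulVec gstar - v) ≤
      qnorm Q (Yh.mulVec g - r) + lk * ρ1 * Real.sqrt (vnorm g ^ 2 + 1) +
        ρ2 * vnorm g + lk * vnorm (V.mulVec g - v) := by
  intro g
  obtain ⟨B, hB⟩ := qnorm_factor Q hQ
  have hQg : ∀ x : Fin H → ℝ,
      qnorm Q (Yh.mulVec x - r) = vnorm ((B * Yh).mulVec x - B.mulVec r) := by
    intro x
    rw [hB, Matrix.mulVec_sub, ← Matrix.mulVec_mulVec]
  rw [hQg gstar, hQg g, ← vnorm_snoc gstar, ← vnorm_snoc g]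
  rw [hQg gstar] at hlk hρ
  rw [← vnorm_snoc gstar] at hρ
  -- positivity facts
  have hγ : 0 < vnorm gstar := vnorm_pos h3
  have hβ : 0 < vnorm (V.mulVec gstar - v) := vnorm_pos (sub_ne_zero.mpr h2)
  have hδ : 0 < vnorm (Fin.snoc gstar (1:ℝ)) := by
    rw [vnorm_snoc]
    exact Real.sqrt_pos.mpr (by positivity)
  by_cases hα0 : vnorm ((B * Yh).mulVec gstar - B.mulVec r) = 0
  · rw [hα0, div_zero] at hlk hρ
    have hρ2' : ρ2 = 0 := by rw [hlk] at hρ; simpa using hρ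
    rw [hα0, hlk, hρ2']
    simp only [zero_mul, mul_zero, zero_add, add_zero]
    exact vnorm_nonneg _
  · have hα : 0 < vnorm ((B * Yh).mulVec gstar - B.mulVec r) :=
      lt_of_le_of_ne (vnorm_nonneg _) (Ne.symm hα0)
    have hlkpos : 0 < lk := by
      rw [hlk]; exact div_pos (mul_pos hlk' hβ) hα
    have id1 : lk * vnorm ((B * Yh).mulVec gstar - B.mulVec r)
        = lk' * vnorm (V.mulVec gstar - v) := by
      rw [hlk]; field_simp
    have id2 : lk * ρ1 * vnorm gstar * vnorm ((B * Yh).mulVec gstar - B.mulVec r)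
        + ρ2 * vnorm ((B * Yh).mulVec gstar - B.mulVec r) * vnorm (Fin.snoc gstar (1:ℝ))
        = lg * vnorm gstar * vnorm (Fin.snoc gstar (1:ℝ)) := by
      field_simp at hρ
      linear_combination hρ
    have hrel : ∀ t : ℝ, vnorm ((Fin.snoc gstar (1:ℝ) : Fin (H+1) → ℝ)
        + t • (Fin.snoc (g - gstar) (0:ℝ) : Fin (H+1) → ℝ)) ^ 2
        = vnorm (gstar + t • (g - gstar)) ^ 2 + 1 := by
      intro t
      rw [snoc_add_smul]
      exact vnorm_snoc_sq _
    have hrel0 : vnorm (Fin.snoc gstar (1:ℝ)) ^ 2 = vnorm gstar ^ 2 + 1 :=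
      vnorm_snoc_sq _
    have hmin' : ∀ t : ℝ, 0 < t → t ≤ 1 →
        vnorm ((B * Yh).mulVec gstar - B.mulVec r) ^ 2 + lg * vnorm gstar ^ 2
          + lk' * vnorm (V.mulVec gstar - v) ^ 2 ≤
        vnorm (((B * Yh).mulVec gstar - B.mulVec r) + t • (B * Yh).mulVec (g - gstar)) ^ 2
          + lg * vnorm (gstar + t • (g - gstar)) ^ 2
          + lk' * vnorm ((V.mulVec gstar - v) + t • V.mulVec (g - gstar)) ^ 2 := by
      intro t _ _
      have h := hmin (gstar + t • (g - gstar))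
      rw [hQg gstar, hQg (gstar + t • (g - gstar))] at h
      have hv1 : (B * Yh).mulVec (gstar + t • (g - gstar)) - B.mulVec r
          = ((B * Yh).mulVec gstar - B.mulVec r) + t • (B * Yh).mulVec (g - gstar) := by
        rw [Matrix.mulVec_add, Matrix.mulVec_smul]; module
      have hv4 : V.mulVec (gstar + t • (g - gstar)) - v
          = ((V.mulVec gstar - v) + t • V.mulVec (g - gstar)) := by
        rw [Matrix.mulVec_add, Matrix.mulVec_smul]; module
      rw [hv1, hv4] at h
      exact h
    have hcore := core ((B * Yh).mulVec gstar - B.mulVec r) ((B * Yh).mulVec (g - gstar))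
      (Fin.snoc gstar (1:ℝ) : Fin (H+1) → ℝ) (Fin.snoc (g - gstar) (0:ℝ) : Fin (H+1) → ℝ)
      gstar (g - gstar) (V.mulVec gstar - v) (V.mulVec (g - gstar))
      lg lk' lk ρ1 ρ2 hρ1 hρ2 hα hβ hγ hδ hlkpos hrel hrel0 id1 id2 hmin'
    have hw1 : ((B * Yh).mulVec gstar - B.mulVec r) + (B * Yh).mulVec (g - gstar)
        = (B * Yh).mulVec g - B.mulVec r := by
      rw [Matrix.mulVec_sub]; module
    have hw2 : (Fin.snoc gstar (1:ℝ) : Fin (H+1) → ℝ)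
        + (Fin.snoc (g - gstar) (0:ℝ) : Fin (H+1) → ℝ)
        = (Fin.snoc g (1:ℝ) : Fin (H+1) → ℝ) := by
      rw [snoc_add, show gstar + (g - gstar) = g by module]
    have hw3 : gstar + (g - gstar) = g := by module
    have hw4 : (V.mulVec gstar - v) + V.mulVec (g - gstar) = V.mulVec g - v := by
      rw [Matrix.mulVec_sub]; module
    rw [hw1, hw2, hw3, hw4] at hcore
    exact hcore
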